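/- arXiv:2009.05198 — 2 statements merged into one kernel-verified Lean document; each statement's English description precedes it below -/
import Mathlib

section
/- For fixed σ̃ > 0 and Δ ≠ 0, the optimal noise σ* maximizing P satisfies σ*² = (Δ² + √(Δ⁴ + 4σ̃⁴))/2; in particular σ* > σ̃. -/
open Real Set

set_option maxHeartbeats 1000000 in
theorem winning_prob_optimal_noise (σ_tilde Δ : ℝ) (hσ : 0 < σ_tilde) (hΔ : Δ ≠ 0)
    (σstar : ℝ) (hσstar : 0 < σstar)
    (hmax : ∀ σ : ℝ, 0 < σ →
      Real.sqrt (2 * σ * σ_tilde / (σ ^ 2 + σ_tilde ^ 2)) *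
          Real.exp (-Δ ^ 2 / (4 * (σ ^ 2 + σ_tilde ^ 2))) ≤
        Real.sqrt (2 * σstar * σ_tilde / (σstar ^ 2 + σ_tilde ^ 2)) *
          Real.exp (-Δ ^ 2 / (4 * (σstar ^ 2 + σ_tilde ^ 2)))) :
    σstar ^ 2 = (Δ ^ 2 + Real.sqrt (Δ ^ 4 + 4 * σ_tilde ^ 4)) / 2 ∧ σ_tilde < σstar := by
  set b := σ_tilde ^ 2 with hbdef
  have hb0 : 0 < b := by positivity
  set r := Real.sqrt (Δ ^ 4 + 4 * σ_tilde ^ 4) with hrdef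
  have hr2 : r ^ 2 = Δ ^ 4 + 4 * σ_tilde ^ 4 := Real.sq_sqrt (by positivity)
  have hrnn : 0 ≤ r := Real.sqrt_nonneg _
  have hΔ2 : 0 < Δ ^ 2 := by positivity
  have hrΔ : Δ ^ 2 < r := by nlinarith
  set t0 := (Δ ^ 2 + r) / 2 with ht0def
  have ht0pos : 0 < t0 := by nlinarith
  have ht0b : b < t0 := by nlinarith
  have ht0Δ : Δ ^ 2 < t0 := by nlinarith
  have hq : t0 ^ 2 - Δ ^ 2 * t0 - b ^ 2 = 0 := by
    have : (2 * t0) ^ 2 = (Δ ^ 2 + r) ^ 2 := by rw [ht0def]; ring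
    nlinarith
  set s0 := Real.sqrt t0 with hs0def
  have hs0pos : 0 < s0 := Real.sqrt_pos.mpr ht0pos
  have hs0sq : s0 ^ 2 = t0 := Real.sq_sqrt ht0pos.le
  set F : ℝ → ℝ :=
    fun σ => Real.log σ / 2 - Real.log (σ ^ 2 + b) / 2 - Δ ^ 2 / (4 * (σ ^ 2 + b)) with hFdef
  -- rewrite P in terms of F
  have hP : ∀ σ : ℝ, 0 < σ →
      Real.sqrt (2 * σ * σ_tilde / (σ ^ 2 + σ_tilde ^ 2)) *
        Real.exp (-Δ ^ 2 / (4 * (σ ^ 2 + σ_tilde ^ 2)))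
      = Real.sqrt (2 * σ_tilde) * Real.exp (F σ) := by
    intro σ hσ'
    have hsb : (0:ℝ) < σ ^ 2 + b := by positivity
    have h1 : Real.exp (Real.log σ / 2) = Real.sqrt σ := by
      rw [Real.sqrt_eq_rpow, Real.rpow_def_of_pos hσ']
      ring_nf
    have h2 : Real.exp (-(Real.log (σ ^ 2 + b) / 2)) = (Real.sqrt (σ ^ 2 + b))⁻¹ := by
      rw [Real.exp_neg, Real.sqrt_eq_rpow, Real.rpow_def_of_pos hsb]
      ring_nf
    have h3 : Real.sqrt (2 * σ * σ_tilde / (σ ^ 2 + b))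
        = Real.sqrt (2 * σ_tilde) * Real.sqrt σ * (Real.sqrt (σ ^ 2 + b))⁻¹ := by
      rw [Real.sqrt_div' _ hsb.le, show 2 * σ * σ_tilde = (2 * σ_tilde) * σ by ring,
        Real.sqrt_mul (by positivity), div_eq_mul_inv]
    rw [hFdef]
    simp only
    rw [show Real.log σ / 2 - Real.log (σ ^ 2 + b) / 2 - Δ ^ 2 / (4 * (σ ^ 2 + b))
        = Real.log σ / 2 + (-(Real.log (σ ^ 2 + b) / 2)) + (-Δ ^ 2 / (4 * (σ ^ 2 + b))) by ring,
      Real.exp_add, Real.exp_add, h1, h2, ← hbdef, h3]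
    ring
  -- derivative of F
  have hderiv : ∀ x : ℝ, 0 < x → HasDerivAt F
      (2 * (b ^ 2 + Δ ^ 2 * x ^ 2 - x ^ 4) / (4 * x * (x ^ 2 + b) ^ 2)) x := by
    intro x hx
    have hsb : (0:ℝ) < x ^ 2 + b := by positivity
    have h2 : HasDerivAt (fun y : ℝ => y ^ 2 + b) (2 * x) x := by
      simpa using (hasDerivAt_pow 2 x).add_const b
    have h1 : HasDerivAt (fun y : ℝ => Real.log y / 2) (1 / (2 * x)) x := by
      have : HasDerivAt (fun y : ℝ => Real.log y / 2) (x⁻¹ / 2) x :=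
        (Real.hasDerivAt_log hx.ne').div_const 2
      convert this using 1
      field_simp
    have h3 : HasDerivAt (fun y : ℝ => Real.log (y ^ 2 + b) / 2) (x / (x ^ 2 + b)) x := by
      have h3' := (Real.hasDerivAt_log hsb.ne').comp x h2
      have : HasDerivAt (fun y : ℝ => Real.log (y ^ 2 + b) / 2) ((x ^ 2 + b)⁻¹ * (2 * x) / 2) x :=
        h3'.div_const 2
      convert this using 1
      field_simp
    have h4 : HasDerivAt (fun y : ℝ => Δ ^ 2 / (4 * (y ^ 2 + b)))
        (-(Δ ^ 2 * (2 * x)) / (4 * (x ^ 2 + b) ^ 2)) x := by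
      have h5 : HasDerivAt (fun y : ℝ => 4 * (y ^ 2 + b)) (4 * (2 * x)) x := h2.const_mul 4
      have h6 := (h5.inv (by positivity)).const_mul (Δ ^ 2)
      have h7 : HasDerivAt (fun y : ℝ => Δ ^ 2 / (4 * (y ^ 2 + b)))
          (Δ ^ 2 * (-(4 * (2 * x)) / (4 * (x ^ 2 + b)) ^ 2)) x := by
        simpa [div_eq_mul_inv] using h6
      convert h7 using 1
      field_simp
    have : HasDerivAt (fun y : ℝ => Real.log y / 2 - Real.log (y ^ 2 + b) / 2 - Δ ^ 2 / (4 * (y ^ 2 + b)))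
        (1 / (2 * x) - x / (x ^ 2 + b) - (-(Δ ^ 2 * (2 * x)) / (4 * (x ^ 2 + b) ^ 2))) x :=
      (h1.sub h3).sub h4
    convert this using 1
    field_simp
    ring
  have hcont : ∀ x : ℝ, 0 < x → ContinuousWithinAt F (Ioc 0 s0) x := fun x hx =>
    (hderiv x hx).continuousAt.continuousWithinAt
  -- strict monotone on (0, s0]
  have hmono : StrictMonoOn F (Ioc 0 s0) := by
    apply strictMonoOn_of_deriv_pos (convex_Ioc 0 s0)
    · intro x hx; exact hcont x hx.1
    · intro x hx
      rw [interior_Ioc] at hx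
      rw [(hderiv x hx.1).deriv]
      have hx2 : x ^ 2 < t0 := by
        nlinarith [mul_pos (sub_pos.mpr hx.2) (by linarith [hx.1, hs0pos] : (0:ℝ) < s0 + x), hs0sq]
      have hnum : 0 < b ^ 2 + Δ ^ 2 * x ^ 2 - x ^ 4 := by nlinarith [sq_nonneg x]
      have hx0 := hx.1
      positivity
  -- strict anti on [s0, ∞)
  have hanti : StrictAntiOn F (Ici s0) := by
    apply strictAntiOn_of_deriv_neg (convex_Ici s0)
    · intro x hx
      exact (hderiv x (lt_of_lt_of_le hs0pos hx)).continuousAt.continuousWithinAt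
    · intro x hx
      rw [interior_Ici] at hx
      have hx0 : 0 < x := hs0pos.trans hx
      rw [(hderiv x hx0).deriv]
      have hx2 : t0 < x ^ 2 := by
        nlinarith [mul_pos (sub_pos.mpr hx) (by linarith [hs0pos, hx] : (0:ℝ) < x + s0), hs0sq]
      have hnum : b ^ 2 + Δ ^ 2 * x ^ 2 - x ^ 4 < 0 := by nlinarith [sq_nonneg x]
      have hdenpos : 0 < 4 * x * (x ^ 2 + b) ^ 2 := by positivity
      exact div_neg_of_neg_of_pos (by linarith) hdenpos
  -- from maximality: F s0 ≤ F σstar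
  have hFle : F s0 ≤ F σstar := by
    have := hmax s0 hs0pos
    rw [hP s0 hs0pos, hP σstar hσstar] at this
    have hpos : (0:ℝ) < Real.sqrt (2 * σ_tilde) := Real.sqrt_pos.mpr (by linarith)
    have := le_of_mul_le_mul_left this hpos
    exact (Real.exp_le_exp).mp this
  -- conclude σstar = s0
  have heq : σstar = s0 := by
    rcases lt_trichotomy σstar s0 with h | h | h
    · exfalso
      have := hmono ⟨hσstar, h.le⟩ ⟨hs0pos, le_refl _⟩ h
      linarith
    · exact h
    · exfalso
      have := hanti (self_mem_Ici) (le_of_lt h) h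
      linarith
  constructor
  · rw [heq, hs0sq, ht0def]
  · have : σ_tilde ^ 2 < σstar ^ 2 := by rw [heq, hs0sq]; exact ht0b
    nlinarith
end

section
/- Fix r > 0 and constants a = σ_T, b = σ̃ > 0. Suppose E[X₀] < μ̃ < μ (i.e. the public's stance lies strictly between the initial perceived stance and the candidate's true stance). Then there exists a unique T* > 0 such that μ(1−e^{−rT*}) + e^{−rT*}E[X₀] = μ̃, and P_T(μ) as a function of T attains its global maximum √(2ab/(a²+b²)) at T = T*. -/
open Real

theorem winning_prob_peak_time (r a b μ μ_tilde x₀ : ℝ)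
    (hr : 0 < r) (ha : 0 < a) (hb : 0 < b)
    (h₁ : x₀ < μ_tilde) (h₂ : μ_tilde < μ) :
    let m : ℝ → ℝ := fun t => μ * (1 - Real.exp (-r * t)) + Real.exp (-r * t) * x₀
    let P : ℝ → ℝ := fun t =>
      Real.sqrt (2 * a * b / (a ^ 2 + b ^ 2)) *
        Real.exp (-(m t - μ_tilde) ^ 2 / (4 * (a ^ 2 + b ^ 2)))
    ∃ Tstar : ℝ, 0 < Tstar ∧ m Tstar = μ_tilde ∧
      (∀ T : ℝ, 0 < T → m T = μ_tilde → T = Tstar) ∧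
      P Tstar = Real.sqrt (2 * a * b / (a ^ 2 + b ^ 2)) ∧
      ∀ T : ℝ, 0 < T → P T ≤ Real.sqrt (2 * a * b / (a ^ 2 + b ^ 2)) := by
  intro m P
  have hc1 : (0:ℝ) < μ - μ_tilde := by linarith
  have hc2 : (0:ℝ) < μ - x₀ := by linarith
  set c : ℝ := (μ - μ_tilde) / (μ - x₀) with hc
  have hcpos : 0 < c := div_pos hc1 hc2
  have hclt : c < 1 := (div_lt_one hc2).mpr (by linarith)
  set T0 : ℝ := -(Real.log c) / r with hT0
  have hlogneg : Real.log c < 0 := Real.log_neg hcpos hclt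
  have hT0pos : 0 < T0 := div_pos (by linarith) hr
  have hexp : Real.exp (-r * T0) = c := by
    have : -r * T0 = Real.log c := by
      rw [hT0]; field_simp
    rw [this, Real.exp_log hcpos]
  -- key characterization: m T = μ_tilde ↔ exp(-r T) = c
  have hm : ∀ T : ℝ, m T = μ_tilde ↔ Real.exp (-r * T) = c := by
    intro T
    simp only [m]
    rw [eq_div_iff (ne_of_gt hc2)]
    constructor
    · intro h; nlinarith
    · intro h; nlinarith
  have hmT0 : m T0 = μ_tilde := (hm T0).mpr hexp
  refine ⟨T0, hT0pos, hmT0, ?_, ?_, ?_⟩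
  · intro T _ hT
    have h1 := (hm T).mp hT
    have : -r * T = -r * T0 := by
      rw [← hexp] at h1
      exact Real.exp_injective h1
    have hrne : r ≠ 0 := ne_of_gt hr
    exact mul_left_cancel₀ (neg_ne_zero.mpr hrne) this
  · simp only [P, hmT0]
    norm_num
  · intro T _
    simp only [P]
    have h1 : Real.exp (-(m T - μ_tilde) ^ 2 / (4 * (a ^ 2 + b ^ 2))) ≤ 1 := by
      apply Real.exp_le_one_iff.mpr
      apply div_nonpos_of_nonpos_of_nonneg
      · nlinarith [sq_nonneg (m T - μ_tilde)]
      · nlinarith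
    nlinarith [Real.sqrt_nonneg (2 * a * b / (a ^ 2 + b ^ 2)),
      Real.exp_pos (-(m T - μ_tilde) ^ 2 / (4 * (a ^ 2 + b ^ 2)))]
end
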